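/- Let K be a finite abstract simplicial complex of dimension D, σ a q-simplex of K, and p a non-negative integer. Then the maximal p-adjacency degree of σ satisfies: #{τ ∈ K : τ is maximal p-adjacent to σ} = deg_A^p(σ) − Σ_{q'=p}^{D} Σ_{τ a q'-simplex of K} min(1, Σ_{q''=q'+1}^{D} Σ_{ρ a q''-simplex of K} 1_{τ ⊆ ρ} · adj^p(σ,ρ)) · adj^p(σ,τ), where 1_{τ ⊆ ρ} equals 1 if τ ⊆ ρ and 0 otherwise, and deg_A^p(σ) = #{τ ∈ K : σ ~_{A_p} τ}. -/

import Mathlib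

attribute [local instance] Classical.propDecidable

variable {V : Type*}

/-- An abstract simplicial complex: a family of nonempty finite sets closed
under taking nonempty subsets. -/
def IsSimplicialComplex (K : Set (Finset V)) : Prop :=
  (∀ σ ∈ K, σ.Nonempty) ∧ ∀ σ ∈ K, ∀ τ : Finset V, τ ⊆ σ → τ.Nonempty → τ ∈ K

/-- A `q`-simplex of `K` is an element of `K` of cardinality `q+1`. -/
def IsSimplex (K : Set (Finset V)) (q : ℕ) (σ : Finset V) : Prop :=
  σ ∈ K ∧ σ.card = q + 1

/-- `σ` and `τ` are `p`-lower adjacent: they share a common `p`-face in `K`. -/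
def LowerAdj (K : Set (Finset V)) (p : ℕ) (σ τ : Finset V) : Prop :=
  ∃ γ, IsSimplex K p γ ∧ γ ⊆ σ ∧ γ ⊆ τ

/-- `σ` and `τ` are `p`-upper adjacent: there is a `p`-simplex of `K`
containing both. -/
def UpperAdj (K : Set (Finset V)) (p : ℕ) (σ τ : Finset V) : Prop :=
  ∃ ρ, IsSimplex K p ρ ∧ σ ⊆ ρ ∧ τ ⊆ ρ

/-- Strict `p`-lower adjacency. -/
def StrictLowerAdj (K : Set (Finset V)) (p : ℕ) (σ τ : Finset V) : Prop :=
  LowerAdj K p σ τ ∧ ¬ LowerAdj K (p + 1) σ τ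

/-- A `q`-simplex `σ` and a `q'`-simplex `τ` are `p`-adjacent if they are
strictly `p`-lower adjacent and not `(q+q'-p)`-upper adjacent (here
`q = σ.card - 1` and `q' = τ.card - 1`). -/
def PAdj (K : Set (Finset V)) (p : ℕ) (σ τ : Finset V) : Prop :=
  StrictLowerAdj K p σ τ ∧
    ¬ UpperAdj K ((σ.card - 1) + (τ.card - 1) - p) σ τ

/-- `τ` is maximal `p`-adjacent to `σ`: it is `p`-adjacent to `σ` and is not a
proper subset of any simplex of `K` that is `p`-adjacent to `σ`. -/
def MaxPAdj (K : Set (Finset V)) (p : ℕ) (σ τ : Finset V) : Prop :=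
  PAdj K p σ τ ∧ ∀ ρ ∈ K, PAdj K p σ ρ → ¬ τ ⊂ ρ

/-- `m_L^p(σ,τ) = min(1, #{p-simplices γ ∈ K : γ ⊆ σ and γ ⊆ τ})`. -/
noncomputable def mL (K : Finset (Finset V)) (p : ℕ) (σ τ : Finset V) : ℕ :=
  min 1 (K.filter (fun γ => γ.card = p + 1 ∧ γ ⊆ σ ∧ γ ⊆ τ)).card

/-- `m_U^r(σ,τ) = min(1, #{r-simplices ρ ∈ K : σ ⊆ ρ and τ ⊆ ρ})`. -/
noncomputable def mU (K : Finset (Finset V)) (r : ℕ) (σ τ : Finset V) : ℕ :=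
  min 1 (K.filter (fun ρ => ρ.card = r + 1 ∧ σ ⊆ ρ ∧ τ ⊆ ρ)).card

/-- `adj^p(σ,τ) = m_L^p(σ,τ)·(1 − m_L^{p+1}(σ,τ))·(1 − m_U^{q+q'−p}(σ,τ))`,
with `q = σ.card - 1` and `q' = τ.card - 1`. -/
noncomputable def adjP (K : Finset (Finset V)) (p : ℕ) (σ τ : Finset V) : ℕ :=
  mL K p σ τ * (1 - mL K (p + 1) σ τ) *
    (1 - mU K ((σ.card - 1) + (τ.card - 1) - p) σ τ)


lemma mL_indicator (K : Finset (Finset V)) (p : ℕ) (σ τ : Finset V) :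
    mL K p σ τ = if LowerAdj (↑K : Set (Finset V)) p σ τ then 1 else 0 := by
  unfold mL
  split_ifs with h
  · obtain ⟨γ, ⟨hγK, hc⟩, h1, h2⟩ := h
    have hmem : γ ∈ K.filter (fun γ => γ.card = p + 1 ∧ γ ⊆ σ ∧ γ ⊆ τ) :=
      Finset.mem_filter.2 ⟨Finset.mem_coe.1 hγK, hc, h1, h2⟩
    have := Finset.card_pos.2 ⟨γ, hmem⟩
    omega
  · have he : K.filter (fun γ => γ.card = p + 1 ∧ γ ⊆ σ ∧ γ ⊆ τ) = ∅ := by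
      apply Finset.filter_eq_empty_iff.2
      intro γ hγ hc
      exact h ⟨γ, ⟨Finset.mem_coe.2 hγ, hc.1⟩, hc.2⟩
    simp [he]

lemma mU_indicator (K : Finset (Finset V)) (r : ℕ) (σ τ : Finset V) :
    mU K r σ τ = if UpperAdj (↑K : Set (Finset V)) r σ τ then 1 else 0 := by
  unfold mU
  split_ifs with h
  · obtain ⟨ρ, ⟨hρK, hc⟩, h1, h2⟩ := h
    have hmem : ρ ∈ K.filter (fun ρ => ρ.card = r + 1 ∧ σ ⊆ ρ ∧ τ ⊆ ρ) :=
      Finset.mem_filter.2 ⟨Finset.mem_coe.1 hρK, hc, h1, h2⟩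
    have := Finset.card_pos.2 ⟨ρ, hmem⟩
    omega
  · have he : K.filter (fun ρ => ρ.card = r + 1 ∧ σ ⊆ ρ ∧ τ ⊆ ρ) = ∅ := by
      apply Finset.filter_eq_empty_iff.2
      intro ρ hρ hc
      exact h ⟨ρ, ⟨Finset.mem_coe.2 hρ, hc.1⟩, hc.2.1, hc.2.2⟩
    simp [he]

lemma adjP_indicator (K : Finset (Finset V)) (p : ℕ) (σ τ : Finset V) :
    adjP K p σ τ = if PAdj (↑K : Set (Finset V)) p σ τ then 1 else 0 := by
  unfold adjP PAdj StrictLowerAdj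
  rw [mL_indicator, mL_indicator, mU_indicator]
  by_cases h1 : LowerAdj (↑K : Set (Finset V)) p σ τ <;>
    by_cases h2 : LowerAdj (↑K : Set (Finset V)) (p + 1) σ τ <;>
    by_cases h3 : UpperAdj (↑K : Set (Finset V)) ((σ.card - 1) + (τ.card - 1) - p) σ τ <;>
    simp [h1, h2, h3]

/-- Closed formula for the maximal `p`-adjacency degree of a `q`-simplex `σ`
in a finite simplicial complex `K` of dimension `D`. -/
theorem maximal_adjacency_degree_formula (K : Finset (Finset V))
    (hK : IsSimplicialComplex (K : Set (Finset V)))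
    (D : ℕ) (hdim : (∀ τ ∈ K, τ.card ≤ D + 1) ∧ ∃ τ ∈ K, τ.card = D + 1)
    (q p : ℕ) (σ : Finset V) (hσ : IsSimplex (K : Set (Finset V)) q σ) :
    (K.filter (fun τ => MaxPAdj (K : Set (Finset V)) p σ τ)).card
      = (K.filter (fun τ => PAdj (K : Set (Finset V)) p σ τ)).card
        - ∑ q' ∈ Finset.Icc p D,
            ∑ τ ∈ K.filter (fun τ => τ.card = q' + 1),
              (min 1 (∑ q'' ∈ Finset.Icc (q' + 1) D,
                  ∑ ρ ∈ K.filter (fun ρ => ρ.card = q'' + 1),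
                    (if τ ⊆ ρ then 1 else 0) * adjP K p σ ρ))
                * adjP K p σ τ := by
  classical
  -- Step 1: rewrite the double sum as a cardinality
  have hsum : (∑ q' ∈ Finset.Icc p D,
      ∑ τ ∈ K.filter (fun τ => τ.card = q' + 1),
        (min 1 (∑ q'' ∈ Finset.Icc (q' + 1) D,
            ∑ ρ ∈ K.filter (fun ρ => ρ.card = q'' + 1),
              (if τ ⊆ ρ then 1 else 0) * adjP K p σ ρ))
          * adjP K p σ τ)
      = (K.filter (fun τ => PAdj (K : Set (Finset V)) p σ τ ∧
          ∃ ρ ∈ K, PAdj (K : Set (Finset V)) p σ ρ ∧ τ ⊂ ρ)).card := by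
    have hstep : ∀ q' ∈ Finset.Icc p D,
        (∑ τ ∈ K.filter (fun τ => τ.card = q' + 1),
          (min 1 (∑ q'' ∈ Finset.Icc (q' + 1) D,
              ∑ ρ ∈ K.filter (fun ρ => ρ.card = q'' + 1),
                (if τ ⊆ ρ then 1 else 0) * adjP K p σ ρ))
            * adjP K p σ τ)
        = ((K.filter (fun τ => τ.card = q' + 1)).filter
            (fun τ => PAdj (K : Set (Finset V)) p σ τ ∧
              ∃ ρ ∈ K, PAdj (K : Set (Finset V)) p σ ρ ∧ τ ⊂ ρ)).card := by
      intro q' hq'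
      rw [Finset.card_filter]
      apply Finset.sum_congr rfl
      intro τ hτ
      rw [Finset.mem_filter] at hτ
      obtain ⟨hτK, hτc⟩ := hτ
      have hmin : (min 1 (∑ q'' ∈ Finset.Icc (q' + 1) D,
          ∑ ρ ∈ K.filter (fun ρ => ρ.card = q'' + 1),
            (if τ ⊆ ρ then 1 else 0) * adjP K p σ ρ))
          = if (∃ ρ ∈ K, PAdj (K : Set (Finset V)) p σ ρ ∧ τ ⊂ ρ) then 1 else 0 := by
        by_cases hex : ∃ ρ ∈ K, PAdj (K : Set (Finset V)) p σ ρ ∧ τ ⊂ ρ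
        · rw [if_pos hex]
          obtain ⟨ρ, hρK, hρP, hsub⟩ := hex
          have hρc : ρ.card ≤ D + 1 := hdim.1 ρ hρK
          have hlt : τ.card < ρ.card := Finset.card_lt_card hsub
          have h1 : ρ.card - 1 ∈ Finset.Icc (q' + 1) D := by
            rw [Finset.mem_Icc]; omega
          have hterm : 0 < ∑ ρ' ∈ K.filter (fun ρ' => ρ'.card = (ρ.card - 1) + 1),
              (if τ ⊆ ρ' then 1 else 0) * adjP K p σ ρ' := by
            apply Finset.sum_pos' (fun _ _ => Nat.zero_le _)
            refine ⟨ρ, Finset.mem_filter.2 ⟨hρK, by omega⟩, ?_⟩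
            rw [adjP_indicator]
            simp [hsub.subset, hρP]
          have hpos : 0 < ∑ q'' ∈ Finset.Icc (q' + 1) D,
              ∑ ρ' ∈ K.filter (fun ρ' => ρ'.card = q'' + 1),
                (if τ ⊆ ρ' then 1 else 0) * adjP K p σ ρ' :=
            lt_of_lt_of_le hterm
              (Finset.single_le_sum (f := fun q'' =>
                ∑ ρ' ∈ K.filter (fun ρ' => ρ'.card = q'' + 1),
                  (if τ ⊆ ρ' then 1 else 0) * adjP K p σ ρ')
                (fun _ _ => Nat.zero_le _) h1)
          omega
        · rw [if_neg hex]
          have hz : (∑ q'' ∈ Finset.Icc (q' + 1) D,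
              ∑ ρ' ∈ K.filter (fun ρ' => ρ'.card = q'' + 1),
                (if τ ⊆ ρ' then 1 else 0) * adjP K p σ ρ') = 0 := by
            apply Finset.sum_eq_zero
            intro q'' hq''
            apply Finset.sum_eq_zero
            intro ρ' hρ'
            rw [Finset.mem_filter] at hρ'
            rw [Finset.mem_Icc] at hq''
            by_cases hsub : τ ⊆ ρ'
            · rw [adjP_indicator]
              by_cases hPρ : PAdj (K : Set (Finset V)) p σ ρ'
              · exfalso
                apply hex
                refine ⟨ρ', hρ'.1, hPρ, ?_⟩
                refine Finset.ssubset_iff_subset_ne.2 ⟨hsub, ?_⟩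
                intro h; rw [h] at hτc; omega
              · simp [hPρ]
            · simp [hsub]
          omega
      rw [hmin, adjP_indicator]
      by_cases h1 : ∃ ρ ∈ K, PAdj (K : Set (Finset V)) p σ ρ ∧ τ ⊂ ρ <;>
        by_cases h2 : PAdj (K : Set (Finset V)) p σ τ <;> simp [h1, h2]
    rw [Finset.sum_congr rfl hstep]
    rw [Finset.card_eq_sum_card_fiberwise
      (f := fun τ => τ.card - 1) (t := Finset.Icc p D) ?hmemf]
    case hmemf =>
      intro τ hτ
      rw [Finset.mem_coe, Finset.mem_filter] at hτ
      obtain ⟨hτK, hPτ, _⟩ := hτ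
      obtain ⟨⟨⟨γ, ⟨hγK, hγc⟩, _, hγτ⟩, _⟩, _⟩ := hPτ
      have h1 : γ.card ≤ τ.card := Finset.card_le_card hγτ
      have h2 : τ.card ≤ D + 1 := hdim.1 τ hτK
      show τ.card - 1 ∈ Finset.Icc p D
      rw [Finset.mem_Icc]
      omega
    apply Finset.sum_congr rfl
    intro q' hq'
    congr 1
    rw [Finset.filter_filter, Finset.filter_filter]
    apply Finset.filter_congr
    intro τ hτ
    have hne : τ.Nonempty := hK.1 τ (Finset.mem_coe.2 hτ)
    have hc := Finset.card_pos.2 hne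
    constructor
    · rintro ⟨h1, h2⟩
      exact ⟨h2, by omega⟩
    · rintro ⟨h1, h2⟩
      exact ⟨by omega, h1⟩
  rw [hsum]
  -- Step 2: MaxPAdj = PAdj ∧ ¬ (strict superset), then subtract
  have e1 : K.filter (fun τ => MaxPAdj (K : Set (Finset V)) p σ τ)
      = (K.filter (fun τ => PAdj (K : Set (Finset V)) p σ τ)).filter
          (fun τ => ¬ ∃ ρ ∈ K, PAdj (K : Set (Finset V)) p σ ρ ∧ τ ⊂ ρ) := by
    rw [Finset.filter_filter]
    apply Finset.filter_congr
    intro τ _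
    unfold MaxPAdj
    constructor
    · rintro ⟨h1, h2⟩
      refine ⟨h1, ?_⟩
      rintro ⟨ρ, hρK, hρP, hsub⟩
      exact h2 ρ (Finset.mem_coe.2 hρK) hρP hsub
    · rintro ⟨h1, h2⟩
      refine ⟨h1, ?_⟩
      intro ρ hρ hρP hsub
      exact h2 ⟨ρ, Finset.mem_coe.1 hρ, hρP, hsub⟩
  have e2 : K.filter (fun τ => PAdj (K : Set (Finset V)) p σ τ ∧
        ∃ ρ ∈ K, PAdj (K : Set (Finset V)) p σ ρ ∧ τ ⊂ ρ)
      = (K.filter (fun τ => PAdj (K : Set (Finset V)) p σ τ)).filter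
          (fun τ => ∃ ρ ∈ K, PAdj (K : Set (Finset V)) p σ ρ ∧ τ ⊂ ρ) := by
    rw [Finset.filter_filter]
  have key := Finset.card_filter_add_card_filter_not
    (s := K.filter (fun τ => PAdj (K : Set (Finset V)) p σ τ))
    (p := fun τ => ∃ ρ ∈ K, PAdj (K : Set (Finset V)) p σ ρ ∧ τ ⊂ ρ)
  rw [e1, e2]
  omega
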